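/- Let F ⊆ {0,1}^n be up-closed (i.e., if x ∈ F and x ≤ y coordinatewise then y ∈ F) and 3-wise t-agreeing. Then F is 3-wise t-intersecting: for all (not necessarily distinct) a, b, c ∈ F, |{i ∈ [n] : a(i) = b(i) = c(i) = 1}| ≥ t. -/
import Mathlib

/-- An up-closed 3-wise `t`-agreeing family `F ⊆ {0,1}^n` is 3-wise
`t`-intersecting. -/
theorem upClosed_tAgreeing_is_tIntersecting (n t : ℕ)
    (F : Finset (Fin n → Bool))
    (hup : ∀ x ∈ F, ∀ y : Fin n → Bool, (∀ j, x j ≤ y j) → y ∈ F)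
    (hagr : ∀ a ∈ F, ∀ b ∈ F, ∀ c ∈ F,
      t ≤ (Finset.univ.filter
        (fun i : Fin n => a i = b i ∧ b i = c i)).card) :
    ∀ a ∈ F, ∀ b ∈ F, ∀ c ∈ F,
      t ≤ (Finset.univ.filter
        (fun i : Fin n => a i = true ∧ b i = true ∧ c i = true)).card := by
  intro a ha b hb c hc
  set c' : Fin n → Bool := fun i => if a i && b i then c i else true with hc'def
  have hc' : c' ∈ F := by
    refine hup c hc c' fun j => ?_
    by_cases h : (a j && b j) = true <;>
      cases hcj : c j <;> simp [c', h, hcj]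
  refine (hagr a ha b hb c' hc').trans (Finset.card_le_card ?_)
  intro i hi
  simp only [Finset.mem_filter, Finset.mem_univ, true_and] at hi ⊢
  rcases hi with ⟨h1, h2⟩
  simp only [c'] at h2
  cases hA : a i <;> cases hB : b i <;> cases hC : c i <;>
    simp [hA, hB, hC] at h1 h2 ⊢
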